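/- Let U be a finite set of size n ≥ 2 and let p, q, r ≥ 1 be natural numbers with n ≥ p ≥ r and n − p + r ≥ q ≥ r. Then there exists a family 𝒞 of q-element subsets of U with |𝒞| ≤ ⌈κ(n,p,q,r) · (p+1) · ln(n)⌉ such that for every p-element subset T of U there is some X ∈ 𝒞 with |T ∩ X| = r. -/

import Mathlib

/-- `κ(n,p,q,r) = C(n,q) / (C(p,r)·C(n−p, q−r))`. -/
noncomputable def kappa (n p q r : ℕ) : ℝ :=
  (n.choose q : ℝ) / ((p.choose r : ℝ) * ((n - p).choose (q - r) : ℝ))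

/-- Let `U` be a finite set of size `n ≥ 2` and `p, q, r ≥ 1` naturals with
`n ≥ p ≥ r` and `n − p + r ≥ q ≥ r`. Then there exists a family `𝒞` of `q`-element
subsets of `U` with `|𝒞| ≤ ⌈κ(n,p,q,r)·(p+1)·ln(n)⌉` such that every `p`-element
subset `T` of `U` satisfies `|T ∩ X| = r` for some `X ∈ 𝒞` (a strong
`(n,p,q,r)`-set-intersection-family). -/
theorem stmt17 {V : Type*} [DecidableEq V] (U : Finset V) (n p q r : ℕ)
    (hU : U.card = n) (hn : 2 ≤ n) (hp : 1 ≤ p) (hq : 1 ≤ q) (hr : 1 ≤ r)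
    (hpn : p ≤ n) (hrp : r ≤ p) (hrq : r ≤ q) (hqn : q ≤ n - p + r) :
    ∃ 𝒞 : Finset (Finset V),
      (∀ X ∈ 𝒞, X ⊆ U ∧ X.card = q) ∧
      𝒞.card ≤ ⌈kappa n p q r * ((p : ℝ) + 1) * Real.log n⌉₊ ∧
      ∀ T ⊆ U, T.card = p → ∃ X ∈ 𝒞, (T ∩ X).card = r := by
  classical
  set m := ⌈kappa n p q r * ((p : ℝ) + 1) * Real.log n⌉₊ with hm
  set S := U.powersetCard q with hS
  set c := p.choose r * (n - p).choose (q - r) with hc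
  set D := n.choose q with hD
  have hqn' : q ≤ n := by omega
  have hqr' : q - r ≤ n - p := by omega
  have hSD : S.card = D := by rw [hS, Finset.card_powersetCard, hU]
  have hcpos : 0 < c := Nat.mul_pos (Nat.choose_pos hrp) (Nat.choose_pos hqr')
  have hDpos : 0 < D := Nat.choose_pos hqn'
  -- every `p`-subset is hit by at least `c` members of `S`
  have key : ∀ T ⊆ U, T.card = p →
      c ≤ (S.filter fun X => (T ∩ X).card = r).card := by
    intro T hTU hTp
    have hcard : ((T.powersetCard r) ×ˢ ((U \ T).powersetCard (q - r))).card = c := by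
      rw [Finset.card_product, Finset.card_powersetCard, Finset.card_powersetCard,
        Finset.card_sdiff_of_subset hTU, hU, hTp]
    rw [← hcard]
    apply Finset.card_le_card_of_injOn (fun AB => AB.1 ∪ AB.2)
    · rintro ⟨A, B⟩ hAB
      simp only [Finset.mem_coe, Finset.mem_product, Finset.mem_powersetCard] at hAB
      obtain ⟨⟨hAT, hAr⟩, hBU, hBq⟩ := hAB
      have hBT : Disjoint B T := Finset.disjoint_of_subset_left hBU Finset.sdiff_disjoint
      have hTB : T ∩ B = ∅ := Finset.disjoint_iff_inter_eq_empty.mp hBT.symm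
      have hABdisj : Disjoint A B := Finset.disjoint_of_subset_left hAT hBT.symm
      simp only [Finset.mem_coe, Finset.mem_filter, hS, Finset.mem_powersetCard]
      refine ⟨⟨Finset.union_subset (hAT.trans hTU) (hBU.trans Finset.sdiff_subset), ?_⟩, ?_⟩
      · rw [Finset.card_union_of_disjoint hABdisj, hAr, hBq]; omega
      · rw [Finset.inter_union_distrib_left, Finset.inter_eq_right.mpr hAT, hTB,
          Finset.union_empty, hAr]
    · rintro ⟨A, B⟩ hAB ⟨A', B'⟩ hAB' hEq0
      simp only [Finset.mem_coe, Finset.mem_product, Finset.mem_powersetCard] at hAB hAB'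
      obtain ⟨⟨hAT, -⟩, hBU, -⟩ := hAB
      obtain ⟨⟨hAT', -⟩, hBU', -⟩ := hAB'
      have hEq : A ∪ B = A' ∪ B' := hEq0
      have recA : ∀ (A B : Finset V), A ⊆ T → B ⊆ U \ T → (A ∪ B) ∩ T = A := by
        intro A B hA hB
        have hBT : Disjoint B T := Finset.disjoint_of_subset_left hB Finset.sdiff_disjoint
        rw [Finset.union_inter_distrib_right, Finset.inter_eq_left.mpr hA,
          Finset.disjoint_iff_inter_eq_empty.mp hBT, Finset.union_empty]
      have recB : ∀ (A B : Finset V), A ⊆ T → B ⊆ U \ T → (A ∪ B) \ T = B := by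
        intro A B hA hB
        have hBT : Disjoint B T := Finset.disjoint_of_subset_left hB Finset.sdiff_disjoint
        rw [Finset.union_sdiff_distrib, Finset.sdiff_eq_empty_iff_subset.mpr hA,
          Finset.sdiff_eq_self_of_disjoint hBT, Finset.empty_union]
      have h1 : A = A' := by
        rw [← recA A B hAT hBU, ← recA A' B' hAT' hBU', hEq]
      have h2 : B = B' := by
        rw [← recB A B hAT hBU, ← recB A' B' hAT' hBU', hEq]
      exact Prod.ext h1 h2
  -- c ≤ D
  have hcD : c ≤ D := by
    obtain ⟨T, hTU, hTp⟩ := Finset.exists_subset_card_eq (s := U) (n := p) (by omega)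
    calc c ≤ (S.filter fun X => (T ∩ X).card = r).card := key T hTU hTp
      _ ≤ S.card := Finset.card_filter_le _ _
      _ = D := hSD
  -- kappa = D / c
  have hkappa : kappa n p q r = (D : ℝ) / (c : ℝ) := by
    rw [kappa, hc, hD]; push_cast; ring
  have hkpos : 0 < kappa n p q r := by
    rw [hkappa]
    exact div_pos (by exact_mod_cast hDpos) (by exact_mod_cast hcpos)
  have hlogn : 0 < Real.log n := Real.log_pos (by exact_mod_cast hn)
  have hm1 : 1 ≤ m := by
    rw [hm, Nat.one_le_ceil_iff]
    positivity
  have hmge : kappa n p q r * ((p : ℝ) + 1) * Real.log n ≤ (m : ℝ) := Nat.le_ceil _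
  -- key numeric inequality
  have hnum : n.choose p * (D - c) ^ m < D ^ m := by
    rcases eq_or_lt_of_le hcD with hEq | hlt
    · rw [hEq, Nat.sub_self, zero_pow (by omega)]
      simpa using pow_pos hDpos m
    · -- real-valued computation
      have hDR : (0 : ℝ) < D := by exact_mod_cast hDpos
      have hcR : (0 : ℝ) < c := by exact_mod_cast hcpos
      have hltR : (c : ℝ) < D := by exact_mod_cast hlt
      set x : ℝ := (c : ℝ) / D with hx
      have hx0 : 0 < x := div_pos hcR hDR
      have hx1 : x < 1 := (div_lt_one hDR).mpr hltR
      have hchoosepos : (0 : ℝ) < (n.choose p : ℝ) := by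
        exact_mod_cast Nat.choose_pos hpn
      have hkx : kappa n p q r * x = 1 := by
        rw [hkappa, hx]; field_simp
      have hmx : ((p : ℝ) + 1) * Real.log n ≤ (m : ℝ) * x := by
        calc ((p : ℝ) + 1) * Real.log n
            = kappa n p q r * ((p : ℝ) + 1) * Real.log n * x := by
              rw [mul_comm (kappa n p q r), mul_assoc, mul_assoc, mul_comm (Real.log n) x,
                ← mul_assoc (kappa n p q r), hkx, one_mul]
          _ ≤ (m : ℝ) * x := by
              exact mul_le_mul_of_nonneg_right hmge hx0.le
      have hlogchoose : Real.log (n.choose p) < (m : ℝ) * x := by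
        have h1 : Real.log (n.choose p) ≤ (p : ℝ) * Real.log n := by
          calc Real.log (n.choose p) ≤ Real.log ((n : ℝ) ^ p) := by
                apply Real.log_le_log (by positivity)
                exact_mod_cast Nat.choose_le_pow n p
            _ = (p : ℝ) * Real.log n := by rw [Real.log_pow]
        have h2 : (p : ℝ) * Real.log n < ((p : ℝ) + 1) * Real.log n := by
          nlinarith
        linarith
      -- from logs to the inequality
      have h1x : (0 : ℝ) < 1 - x := by linarith
      have hlog1x : Real.log (1 - x) ≤ -x := by
        have := Real.log_le_sub_one_of_pos h1x
        linarith
      have hmain : (n.choose p : ℝ) * (1 - x) ^ m < 1 := by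
        have hpos : (0 : ℝ) < (n.choose p : ℝ) * (1 - x) ^ m :=
          mul_pos hchoosepos (pow_pos h1x m)
        rw [← Real.log_neg_iff hpos]
        rw [Real.log_mul (ne_of_gt hchoosepos) (ne_of_gt (pow_pos h1x m)),
          Real.log_pow]
        have : (m : ℝ) * Real.log (1 - x) ≤ (m : ℝ) * (-x) := by
          apply mul_le_mul_of_nonneg_left hlog1x (by positivity)
        nlinarith
      have hfin : (n.choose p : ℝ) * ((D : ℝ) - c) ^ m < (D : ℝ) ^ m := by
        have hDx : (D : ℝ) - c = (D : ℝ) * (1 - x) := by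
          rw [hx]; field_simp
        calc (n.choose p : ℝ) * ((D : ℝ) - c) ^ m
            = (D : ℝ) ^ m * ((n.choose p : ℝ) * (1 - x) ^ m) := by
              rw [hDx, mul_pow]; ring
          _ < (D : ℝ) ^ m * 1 := by
              exact mul_lt_mul_of_pos_left hmain (pow_pos hDR m)
          _ = (D : ℝ) ^ m := mul_one _
      have hcast : ((D - c : ℕ) : ℝ) = (D : ℝ) - c := by
        push_cast [Nat.cast_sub hcD]; ring
      rw [← hcast] at hfin
      exact_mod_cast hfin
  -- the union bound
  set F := Fintype.piFinset (fun _ : Fin m => S) with hF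
  set Bad := F.filter (fun f => ∃ T ∈ U.powersetCard p, ∀ i, (T ∩ f i).card ≠ r) with hBad
  have hFcard : F.card = D ^ m := by
    rw [hF, Fintype.card_piFinset_const, hSD]
  have hBadcard : Bad.card ≤ n.choose p * (D - c) ^ m := by
    have hsub : Bad ⊆ (U.powersetCard p).biUnion
        (fun T => Fintype.piFinset (fun _ : Fin m => S.filter (fun X => (T ∩ X).card ≠ r))) := by
      intro f hf
      rw [hBad, Finset.mem_filter] at hf
      obtain ⟨hfF, T, hT, hTf⟩ := hf
      rw [Finset.mem_biUnion]
      refine ⟨T, hT, ?_⟩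
      rw [Fintype.mem_piFinset]
      intro i
      rw [Finset.mem_filter]
      exact ⟨Fintype.mem_piFinset.mp hfF i, hTf i⟩
    calc Bad.card ≤ _ := Finset.card_le_card hsub
      _ ≤ ∑ T ∈ U.powersetCard p,
          (Fintype.piFinset (fun _ : Fin m => S.filter (fun X => (T ∩ X).card ≠ r))).card :=
        Finset.card_biUnion_le
      _ ≤ ∑ T ∈ U.powersetCard p, (D - c) ^ m := by
          apply Finset.sum_le_sum
          intro T hT
          rw [Fintype.card_piFinset_const]
          apply Nat.pow_le_pow_left
          rw [Finset.mem_powersetCard] at hT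
          have := key T hT.1 hT.2
          have hsplit := Finset.card_filter_add_card_filter_not
            (s := S) (p := fun X => (T ∩ X).card = r)
          have : (S.filter (fun X => ¬ (T ∩ X).card = r)).card ≤ S.card - c := by omega
          simpa [hSD] using this
      _ = n.choose p * (D - c) ^ m := by
          rw [Finset.sum_const, Finset.card_powersetCard, hU, smul_eq_mul]
  have hlt : Bad.card < F.card := by
    rw [hFcard]; omega
  have hne : (F \ Bad).Nonempty := by
    rw [← Finset.card_pos]
    have := Finset.le_card_sdiff Bad F
    omega
  obtain ⟨f, hf⟩ := hne
  rw [Finset.mem_sdiff] at hf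
  obtain ⟨hfF, hfBad⟩ := hf
  have hgood : ∀ T ∈ U.powersetCard p, ∃ i, (T ∩ f i).card = r := by
    intro T hT
    by_contra hcon
    push_neg at hcon
    apply hfBad
    rw [hBad, Finset.mem_filter]
    exact ⟨hfF, T, hT, hcon⟩
  refine ⟨Finset.image f Finset.univ, ?_, ?_, ?_⟩
  · intro X hX
    rw [Finset.mem_image] at hX
    obtain ⟨i, -, rfl⟩ := hX
    have := Fintype.mem_piFinset.mp hfF i
    rw [hS, Finset.mem_powersetCard] at this
    exact this
  · calc (Finset.image f Finset.univ).card ≤ (Finset.univ : Finset (Fin m)).card :=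
        Finset.card_image_le
      _ = m := by simp
  · intro T hTU hTp
    obtain ⟨i, hi⟩ := hgood T (Finset.mem_powersetCard.mpr ⟨hTU, hTp⟩)
    exact ⟨f i, Finset.mem_image.mpr ⟨i, Finset.mem_univ i, rfl⟩, hi⟩
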